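/- Let H be an infinite-dimensional separable complex Hilbert space, let A, B : H → H be bounded linear operators, let ψ₀ ∈ H, and let r > 1. Define the attainable set S as the set of all x ∈ H for which there exist T ≥ 0, a function u : ℝ → ℝ whose restriction to [0,T] is in L^r, and a continuous function ψ : [0,T] → H with ψ(0) = ψ₀, ψ(t) = ψ₀ + ∫₀^t (A ψ(s) + u(s)·B ψ(s)) ds for all t ∈ [0,T], and ψ(T) = x. Then S is meager in H (it is contained in a countable union of closed sets with empty interior); in particular S has empty interior in H. -/

import Mathlib

open MeasureTheory Set

set_option linter.unusedSectionVars false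
set_option linter.unusedVariables false
set_option maxHeartbeats 1000000

noncomputable section BMSAux
variable {H : Type*} [NormedAddCommGroup H] [InnerProductSpace ℂ H] [CompleteSpace H]

/-- Vectors obtained from `ψ₀` by applying at most `n` operators among `A`, `B`. -/
def bmsWords (A B : H →L[ℂ] H) (ψ₀ : H) : ℕ → Set H
  | 0 => {ψ₀}
  | n + 1 => bmsWords A B ψ₀ n ∪ (A '' bmsWords A B ψ₀ n ∪ B '' bmsWords A B ψ₀ n)

lemma bmsWords_finite (A B : H →L[ℂ] H) (ψ₀ : H) : ∀ n, (bmsWords A B ψ₀ n).Finite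
  | 0 => Set.finite_singleton _
  | n + 1 => ((bmsWords_finite A B ψ₀ n).union
      (((bmsWords_finite A B ψ₀ n).image A).union ((bmsWords_finite A B ψ₀ n).image B)))

lemma bmsWords_span_mono (A B : H →L[ℂ] H) (ψ₀ : H) {m n : ℕ} (h : m ≤ n) :
    Submodule.span ℂ (bmsWords A B ψ₀ m) ≤ Submodule.span ℂ (bmsWords A B ψ₀ n) := by
  induction n with
  | zero => simp [Nat.le_zero.mp h]
  | succ n ih =>
    rcases Nat.lt_or_ge m (n+1) with h' | h'
    · exact (ih (Nat.lt_succ_iff.mp h')).trans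
        (Submodule.span_mono (by rw [bmsWords]; exact Set.subset_union_left))
    · have : m = n + 1 := le_antisymm h h'
      subst this; exact le_rfl

lemma bmsWords_step (A B : H →L[ℂ] H) (ψ₀ : H) {j : ℕ} {x : H}
    (hx : x ∈ Submodule.span ℂ (bmsWords A B ψ₀ j)) (c d : ℝ) :
    x + c • A x + d • B x ∈ Submodule.span ℂ (bmsWords A B ψ₀ (j + 1)) := by
  have hx' : x ∈ Submodule.span ℂ (bmsWords A B ψ₀ (j+1)) :=
    bmsWords_span_mono A B ψ₀ (Nat.le_succ j) hx
  have hA : A x ∈ Submodule.span ℂ (bmsWords A B ψ₀ (j+1)) := by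
    have : A x ∈ Submodule.map (A : H →ₗ[ℂ] H) (Submodule.span ℂ (bmsWords A B ψ₀ j)) :=
      ⟨x, hx, rfl⟩
    rw [Submodule.map_span] at this
    refine Submodule.span_mono ?_ this
    rw [show bmsWords A B ψ₀ (j+1) = bmsWords A B ψ₀ j ∪ (A '' bmsWords A B ψ₀ j ∪ B '' bmsWords A B ψ₀ j) from rfl]
    exact (Set.subset_union_left).trans Set.subset_union_right
  have hB : B x ∈ Submodule.span ℂ (bmsWords A B ψ₀ (j+1)) := by
    have : B x ∈ Submodule.map (B : H →ₗ[ℂ] H) (Submodule.span ℂ (bmsWords A B ψ₀ j)) :=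
      ⟨x, hx, rfl⟩
    rw [Submodule.map_span] at this
    refine Submodule.span_mono ?_ this
    rw [show bmsWords A B ψ₀ (j+1) = bmsWords A B ψ₀ j ∪ (A '' bmsWords A B ψ₀ j ∪ B '' bmsWords A B ψ₀ j) from rfl]
    exact (Set.subset_union_right).trans Set.subset_union_right
  exact add_mem (add_mem hx' (Submodule.smul_of_tower_mem _ c hA))
    (Submodule.smul_of_tower_mem _ d hB)

lemma bmsWords_mem_zero (A B : H →L[ℂ] H) (ψ₀ : H) :
    ψ₀ ∈ Submodule.span ℂ (bmsWords A B ψ₀ 0) :=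
  Submodule.subset_span rfl

/-- A bounded subset of the span of finitely many vectors is compact (once closed). -/
lemma bms_compact_span_ball (s : Set H) (hs : s.Finite) (ρ : ℝ) :
    IsCompact ((Submodule.span ℂ s : Set H) ∩ Metric.closedBall 0 ρ) := by
  haveI : FiniteDimensional ℂ (Submodule.span ℂ s) := FiniteDimensional.span_of_finite ℂ hs
  haveI : ProperSpace (Submodule.span ℂ s) := FiniteDimensional.proper ℂ _
  have : ((Submodule.span ℂ s : Set H) ∩ Metric.closedBall 0 ρ)
      = Subtype.val '' (Metric.closedBall (0 : Submodule.span ℂ s) ρ) := by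
    ext x
    constructor
    · rintro ⟨hx, hb⟩
      refine ⟨⟨x, hx⟩, ?_, rfl⟩
      simpa [Metric.mem_closedBall, dist_eq_norm] using (by simpa [dist_eq_norm] using hb : ‖x‖ ≤ ρ)
    · rintro ⟨⟨x, hx⟩, hb, rfl⟩
      refine ⟨hx, ?_⟩
      simpa [Metric.mem_closedBall, dist_eq_norm] using
        (by simpa [Metric.mem_closedBall, dist_eq_norm] using hb : ‖(⟨x, hx⟩ : Submodule.span ℂ s)‖ ≤ ρ)
  rw [this]
  exact (isCompact_closedBall _ _).image continuous_subtype_val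

/-- In an infinite-dimensional space a compact set has empty interior. -/
lemma bms_compact_interior_empty {K : Set H} (hinf : ¬ FiniteDimensional ℂ H)
    (hK : IsCompact K) : interior K = ∅ := by
  by_contra h
  obtain ⟨x, hx⟩ := Set.nonempty_iff_ne_empty.mpr h
  obtain ⟨ε, hε, hball⟩ := Metric.isOpen_iff.mp isOpen_interior x hx
  have hsub : Metric.closedBall x (ε/2) ⊆ K :=
    (Metric.closedBall_subset_ball (by linarith)).trans (hball.trans interior_subset)
  have hcpt : IsCompact (Metric.closedBall x (ε/2)) :=
    hK.of_isClosed_subset Metric.isClosed_closedBall hsub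
  exact hinf (FiniteDimensional.of_isCompact_closedBall ℂ (by linarith : (0:ℝ) < ε/2) hcpt)


/-- The vector field. -/
noncomputable def bmsF (A B : H →L[ℂ] H) (u : ℝ → ℝ) (ψ : ℝ → H) : ℝ → H :=
  fun s => A (ψ s) + u s • B (ψ s)

/-- The weight. -/
noncomputable def bmsW (A B : H →L[ℂ] H) (u : ℝ → ℝ) : ℝ → ℝ :=
  fun s => (‖A‖ + ‖B‖ + 1) * (1 + |u s|)

lemma bmsW_nonneg (A B : H →L[ℂ] H) (u : ℝ → ℝ) (s : ℝ) : 0 ≤ bmsW A B u s := by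
  have h1 : (0:ℝ) ≤ ‖A‖ := norm_nonneg _
  have h2 : (0:ℝ) ≤ ‖B‖ := norm_nonneg _
  have h3 : (0:ℝ) ≤ |u s| := abs_nonneg _
  unfold bmsW; positivity

lemma bmsF_sub_le (A B : H →L[ℂ] H) (u : ℝ → ℝ) (ψ : ℝ → H) (x : H) (s : ℝ) :
    ‖bmsF A B u ψ s - (A x + u s • B x)‖ ≤ bmsW A B u s * ‖ψ s - x‖ := by
  have : bmsF A B u ψ s - (A x + u s • B x) = A (ψ s - x) + u s • B (ψ s - x) := by
    simp [bmsF, map_sub, smul_sub]; abel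
  rw [this]
  calc ‖A (ψ s - x) + u s • B (ψ s - x)‖
      ≤ ‖A (ψ s - x)‖ + ‖u s • B (ψ s - x)‖ := norm_add_le _ _
    _ ≤ ‖A‖ * ‖ψ s - x‖ + |u s| * (‖B‖ * ‖ψ s - x‖) := by
        gcongr
        · exact A.le_opNorm _
        · rw [norm_smul, Real.norm_eq_abs]
          gcongr
          exact B.le_opNorm _
    _ ≤ bmsW A B u s * ‖ψ s - x‖ := by
        have h1 : (0:ℝ) ≤ ‖A‖ := norm_nonneg _
        have h2 : (0:ℝ) ≤ ‖B‖ := norm_nonneg _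
        have h3 : (0:ℝ) ≤ |u s| := abs_nonneg _
        have h4 : (0:ℝ) ≤ ‖ψ s - x‖ := norm_nonneg _
        unfold bmsW
        nlinarith [mul_nonneg h2 h4, mul_nonneg h3 h4, mul_nonneg (mul_nonneg h3 h1) h4,
          mul_nonneg (mul_nonneg h3 h2) h4, mul_nonneg h1 h4]

variable {A B : H →L[ℂ] H} {T : ℝ} {u : ℝ → ℝ} {ψ : ℝ → H}

lemma bms_II {g : ℝ → H} (h : IntegrableOn g (Icc (0:ℝ) T))
    {a b : ℝ} (ha : a ∈ Icc (0:ℝ) T) (hb : b ∈ Icc (0:ℝ) T) (hab : a ≤ b) :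
    IntervalIntegrable g volume a b := by
  refine MeasureTheory.IntegrableOn.intervalIntegrable ?_
  rw [uIcc_of_le hab]
  exact h.mono_set (Icc_subset_Icc ha.1 hb.2)

lemma bms_IIr {g : ℝ → ℝ} (h : IntegrableOn g (Icc (0:ℝ) T))
    {a b : ℝ} (ha : a ∈ Icc (0:ℝ) T) (hb : b ∈ Icc (0:ℝ) T) (hab : a ≤ b) :
    IntervalIntegrable g volume a b := by
  refine MeasureTheory.IntegrableOn.intervalIntegrable ?_
  rw [uIcc_of_le hab]
  exact h.mono_set (Icc_subset_Icc ha.1 hb.2)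

lemma bmsW_integrableOn (A B : H →L[ℂ] H) (hu : IntegrableOn u (Icc (0:ℝ) T)) :
    IntegrableOn (bmsW A B u) (Icc (0:ℝ) T) := by
  unfold bmsW
  exact ((integrable_const (1:ℝ)).add hu.abs).const_mul _

lemma bmsF_integrableOn (hT : 0 ≤ T) (hu : IntegrableOn u (Icc (0:ℝ) T))
    (hψ : ContinuousOn ψ (Icc (0:ℝ) T)) :
    IntegrableOn (bmsF A B u ψ) (Icc (0:ℝ) T) := by
  have hA : IntegrableOn (fun s => A (ψ s)) (Icc (0:ℝ) T) :=
    (A.continuous.comp_continuousOn hψ).integrableOn_compact isCompact_Icc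
  obtain ⟨C, hC⟩ := isCompact_Icc.exists_bound_of_continuousOn
    (B.continuous.comp_continuousOn hψ)
  have hmeas : AEStronglyMeasurable (fun s => u s • B (ψ s))
      (volume.restrict (Icc (0:ℝ) T)) :=
    hu.aestronglyMeasurable.smul
      ((B.continuous.comp_continuousOn hψ).aestronglyMeasurable measurableSet_Icc)
  have hB : IntegrableOn (fun s => u s • B (ψ s)) (Icc (0:ℝ) T) := by
    refine Integrable.mono' (g := fun s => |u s| * C) (hu.abs.mul_const C) hmeas ?_
    filter_upwards [ae_restrict_mem measurableSet_Icc] with s hs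
    rw [norm_smul, Real.norm_eq_abs]
    have := hC s hs
    have : ‖B (ψ s)‖ ≤ C := this
    have h3 : (0:ℝ) ≤ |u s| := abs_nonneg _
    nlinarith [norm_nonneg (B (ψ s))]
  exact hA.add hB


lemma bms_w_nonneg_int (hu : IntegrableOn u (Icc (0:ℝ) T))
    {a b : ℝ} (hab : a ≤ b) : 0 ≤ ∫ s in a..b, bmsW A B u s :=
  intervalIntegral.integral_nonneg hab (fun s _ => bmsW_nonneg A B u s)

lemma bms_w_mono (hu : IntegrableOn u (Icc (0:ℝ) T))
    {a s b : ℝ} (ha : a ∈ Icc (0:ℝ) T) (hs : s ∈ Icc (0:ℝ) T) (hb : b ∈ Icc (0:ℝ) T)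
    (has : a ≤ s) (hsb : s ≤ b) :
    (∫ t in a..s, bmsW A B u t) ≤ ∫ t in a..b, bmsW A B u t := by
  have h1 := intervalIntegral.integral_add_adjacent_intervals
    (bms_IIr (bmsW_integrableOn A B hu) ha hs has)
    (bms_IIr (bmsW_integrableOn A B hu) hs hb hsb)
  have h2 : 0 ≤ ∫ t in s..b, bmsW A B u t := bms_w_nonneg_int hu hsb
  linarith

lemma bms_diff (hT : 0 ≤ T) (hu : IntegrableOn u (Icc (0:ℝ) T))
    (hψ : ContinuousOn ψ (Icc (0:ℝ) T))
    (heq : ∀ t ∈ Icc (0:ℝ) T, ψ t = ψ₀ + ∫ s in (0:ℝ)..t, bmsF A B u ψ s)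
    {a b : ℝ} (ha : a ∈ Icc (0:ℝ) T) (hb : b ∈ Icc (0:ℝ) T) :
    ψ b - ψ a = ∫ s in a..b, bmsF A B u ψ s := by
  have hfi := bmsF_integrableOn (A := A) (B := B) hT hu hψ
  have h0 : (0:ℝ) ∈ Icc (0:ℝ) T := ⟨le_rfl, hT⟩
  rw [heq b hb, heq a ha, add_sub_add_left_eq_sub]
  exact intervalIntegral.integral_interval_sub_left
    (bms_II hfi h0 hb hb.1) (bms_II hfi h0 ha ha.1)

lemma bms_norm_int_le (hT : 0 ≤ T) (hu : IntegrableOn u (Icc (0:ℝ) T))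
    (hψ : ContinuousOn ψ (Icc (0:ℝ) T))
    {a b : ℝ} (ha : a ∈ Icc (0:ℝ) T) (hb : b ∈ Icc (0:ℝ) T) (hab : a ≤ b)
    {x : H} {C : ℝ} (hC : ∀ s ∈ Icc a b, ‖ψ s - x‖ ≤ C) (hC0 : 0 ≤ C) :
    ‖∫ s in a..b, (bmsF A B u ψ s - (A x + u s • B x))‖
      ≤ C * ∫ s in a..b, bmsW A B u s := by
  have hwi : IntervalIntegrable (fun s => C * bmsW A B u s) volume a b :=
    bms_IIr ((bmsW_integrableOn A B hu).const_mul C) ha hb hab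
  have hae : ∀ᵐ t ∂(volume.restrict (Set.uIoc a b)),
      ‖bmsF A B u ψ t - (A x + u t • B x)‖ ≤ C * bmsW A B u t := by
    filter_upwards [ae_restrict_mem measurableSet_uIoc] with s hs
    have hs' : s ∈ Icc a b := by
      rw [uIoc_of_le hab] at hs; exact Ioc_subset_Icc_self hs
    refine (bmsF_sub_le A B u ψ x s).trans ?_
    rw [mul_comm]
    exact mul_le_mul_of_nonneg_right (hC s hs') (bmsW_nonneg A B u s)
  have h := intervalIntegral.norm_integral_le_abs_of_norm_le hae hwi
  calc ‖∫ s in a..b, (bmsF A B u ψ s - (A x + u s • B x))‖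
      ≤ |∫ t in a..b, C * bmsW A B u t| := h
    _ = C * ∫ s in a..b, bmsW A B u s := by
        rw [intervalIntegral.integral_const_mul, abs_of_nonneg]
        exact mul_nonneg hC0 (bms_w_nonneg_int hu hab)

lemma bms_incr_le (hT : 0 ≤ T) (hu : IntegrableOn u (Icc (0:ℝ) T))
    (hψ : ContinuousOn ψ (Icc (0:ℝ) T))
    (heq : ∀ t ∈ Icc (0:ℝ) T, ψ t = ψ₀ + ∫ s in (0:ℝ)..t, bmsF A B u ψ s)
    {a b : ℝ} (ha : a ∈ Icc (0:ℝ) T) (hb : b ∈ Icc (0:ℝ) T) (hab : a ≤ b)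
    {C : ℝ} (hC : ∀ s ∈ Icc a b, ‖ψ s‖ ≤ C) (hC0 : 0 ≤ C) :
    ‖ψ b - ψ a‖ ≤ C * ∫ s in a..b, bmsW A B u s := by
  rw [bms_diff hT hu hψ heq ha hb]
  have h := bms_norm_int_le (A := A) (B := B) (x := 0) hT hu hψ ha hb hab
    (fun s hs => by simpa using hC s hs) hC0
  simpa using h

lemma bms_half_bound (hT : 0 ≤ T) (hu : IntegrableOn u (Icc (0:ℝ) T))
    (hψ : ContinuousOn ψ (Icc (0:ℝ) T))
    (heq : ∀ t ∈ Icc (0:ℝ) T, ψ t = ψ₀ + ∫ s in (0:ℝ)..t, bmsF A B u ψ s)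
    {a b : ℝ} (ha : a ∈ Icc (0:ℝ) T) (hb : b ∈ Icc (0:ℝ) T) (hab : a ≤ b)
    (hm : (∫ s in a..b, bmsW A B u s) ≤ 1/2) :
    ∀ t ∈ Icc a b, ‖ψ t‖ ≤ 2 * ‖ψ a‖ := by
  have hsub : Icc a b ⊆ Icc (0:ℝ) T := Icc_subset_Icc ha.1 hb.2
  obtain ⟨t₀, ht₀, hmax⟩ := isCompact_Icc.exists_isMaxOn (nonempty_Icc.mpr hab)
    ((hψ.mono hsub).norm)
  have ht₀' : t₀ ∈ Icc (0:ℝ) T := hsub ht₀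
  have hC0 : 0 ≤ ‖ψ t₀‖ := norm_nonneg _
  have key : ‖ψ t₀ - ψ a‖ ≤ ‖ψ t₀‖ * (1/2) := by
    have h1 : ‖ψ t₀ - ψ a‖ ≤ ‖ψ t₀‖ * ∫ s in a..t₀, bmsW A B u s := by
      refine bms_incr_le hT hu hψ heq ha ht₀' ht₀.1 ?_ hC0
      intro s hs
      exact hmax (Icc_subset_Icc le_rfl ht₀.2 hs)
    refine h1.trans ?_
    refine mul_le_mul_of_nonneg_left ?_ hC0
    exact (bms_w_mono hu ha ht₀' hb ht₀.1 ht₀.2).trans hm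
  have ht₀2 : ‖ψ t₀‖ ≤ 2 * ‖ψ a‖ := by
    have := norm_sub_norm_le (ψ t₀) (ψ a)
    linarith [this.trans key]
  intro t ht
  exact (hmax ht).trans ht₀2

lemma bms_sup_bound (hT : 0 ≤ T) (hu : IntegrableOn u (Icc (0:ℝ) T))
    (hψ : ContinuousOn ψ (Icc (0:ℝ) T))
    (heq : ∀ t ∈ Icc (0:ℝ) T, ψ t = ψ₀ + ∫ s in (0:ℝ)..t, bmsF A B u ψ s) :
    ∀ q : ℕ, ∀ a b : ℝ, a ∈ Icc (0:ℝ) T → b ∈ Icc (0:ℝ) T → a ≤ b →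
      (∫ s in a..b, bmsW A B u s) ≤ q / 2 →
      ∀ t ∈ Icc a b, ‖ψ t‖ ≤ 2 ^ q * ‖ψ a‖ := by
  intro q
  induction q with
  | zero =>
    intro a b ha hb hab hm t ht
    have hsub : Icc a b ⊆ Icc (0:ℝ) T := Icc_subset_Icc ha.1 hb.2
    obtain ⟨t₀, ht₀, hmax⟩ := isCompact_Icc.exists_isMaxOn (nonempty_Icc.mpr hab)
      ((hψ.mono hsub).norm)
    have ht' : t ∈ Icc (0:ℝ) T := hsub ht
    have h1 : ‖ψ t - ψ a‖ ≤ ‖ψ t₀‖ * ∫ s in a..t, bmsW A B u s := by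
      refine bms_incr_le hT hu hψ heq ha ht' ht.1 ?_ (norm_nonneg _)
      intro s hs
      exact hmax (Icc_subset_Icc le_rfl ht.2 hs)
    have h2 : (∫ s in a..t, bmsW A B u s) = 0 := by
      have hle := (bms_w_mono hu ha ht' hb ht.1 ht.2).trans hm
      have hge := bms_w_nonneg_int (A := A) (B := B) hu ht.1
      push_cast at hle
      linarith
    rw [h2, mul_zero] at h1
    have := norm_sub_norm_le (ψ t) (ψ a)
    simpa using (by linarith [this.trans h1] : ‖ψ t‖ ≤ ‖ψ a‖)
  | succ q ih =>
    intro a b ha hb hab hm t ht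
    have hsub : Icc a b ⊆ Icc (0:ℝ) T := Icc_subset_Icc ha.1 hb.2
    have hψa : 0 ≤ ‖ψ a‖ := norm_nonneg _
    by_cases hm' : (∫ s in a..b, bmsW A B u s) ≤ 1/2
    · have h2 := bms_half_bound hT hu hψ heq ha hb hab hm' t ht
      have hp : (2:ℝ) ≤ 2 ^ (q+1) := le_self_pow₀ one_le_two (Nat.succ_ne_zero q)
      nlinarith
    · push_neg at hm'
      -- split the interval by the intermediate value theorem
      have hcont : ContinuousOn (fun x => ∫ s in a..x, bmsW A B u s) (Icc a b) := by
        have := intervalIntegral.continuousOn_primitive_interval'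
          (bms_IIr (bmsW_integrableOn A B hu) ha hb hab) (left_mem_uIcc (a := a) (b := b))
        rwa [uIcc_of_le hab] at this
      have hmem : (1/2 : ℝ) ∈ Icc (∫ s in a..a, bmsW A B u s) (∫ s in a..b, bmsW A B u s) := by
        simp only [intervalIntegral.integral_same]
        exact ⟨by norm_num, hm'.le⟩
      obtain ⟨c, hc, hgc⟩ := intermediate_value_Icc hab hcont hmem
      have hc' : c ∈ Icc (0:ℝ) T := hsub hc
      have hhalf : ∀ t ∈ Icc a c, ‖ψ t‖ ≤ 2 * ‖ψ a‖ :=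
        bms_half_bound hT hu hψ heq ha hc' hc.1 (le_of_eq hgc)
      have hrest : (∫ s in c..b, bmsW A B u s) ≤ q / 2 := by
        have hadd := intervalIntegral.integral_add_adjacent_intervals
          (bms_IIr (bmsW_integrableOn A B hu) ha hc' hc.1)
          (bms_IIr (bmsW_integrableOn A B hu) hc' hb hc.2)
        push_cast at hm ⊢
        have hgc' : (∫ s in a..c, bmsW A B u s) = 1/2 := hgc
        rw [hgc'] at hadd
        linarith
      have hIH : ∀ t ∈ Icc c b, ‖ψ t‖ ≤ 2 ^ q * ‖ψ c‖ := ih c b hc' hb hc.2 hrest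
      rcases le_total t c with htc | htc
      · have := hhalf t ⟨ht.1, htc⟩
        have hp : (2:ℝ) ≤ 2 ^ (q+1) := le_self_pow₀ one_le_two (Nat.succ_ne_zero q)
        nlinarith
      · have h1 := hIH t ⟨htc, ht.2⟩
        have h2 := hhalf c ⟨hc.1, le_rfl⟩
        have hp : (0:ℝ) ≤ 2 ^ q := by positivity
        calc ‖ψ t‖ ≤ 2 ^ q * ‖ψ c‖ := h1
          _ ≤ 2 ^ q * (2 * ‖ψ a‖) := by nlinarith
          _ = 2 ^ (q+1) * ‖ψ a‖ := by ring

lemma bms_euler (hT : 0 ≤ T) (hu : IntegrableOn u (Icc (0:ℝ) T))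
    (hψ : ContinuousOn ψ (Icc (0:ℝ) T))
    (heq : ∀ t ∈ Icc (0:ℝ) T, ψ t = ψ₀ + ∫ s in (0:ℝ)..t, bmsF A B u ψ s)
    {R : ℝ} (hR : ∀ t ∈ Icc (0:ℝ) T, ‖ψ t‖ ≤ R) (hR0 : 0 ≤ R)
    {a b δ : ℝ} (ha : a ∈ Icc (0:ℝ) T) (hb : b ∈ Icc (0:ℝ) T) (hab : a ≤ b)
    (hδ0 : 0 ≤ δ) (hδ : (∫ s in a..b, bmsW A B u s) ≤ δ)
    {x : H} {e : ℝ} (he0 : 0 ≤ e) (he : ‖ψ a - x‖ ≤ e) :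
    ‖ψ b - (x + (b - a) • A x + (∫ s in a..b, u s) • B x)‖
      ≤ e * (1 + δ) + δ * (δ * R) := by
  have hsub : Icc a b ⊆ Icc (0:ℝ) T := Icc_subset_Icc ha.1 hb.2
  have hsx : ∀ s ∈ Icc a b, ‖ψ s - x‖ ≤ e + δ * R := by
    intro s hs
    have hs' : s ∈ Icc (0:ℝ) T := hsub hs
    have hinc : ‖ψ s - ψ a‖ ≤ R * ∫ t in a..s, bmsW A B u t :=
      bms_incr_le hT hu hψ heq ha hs' hs.1
        (fun t ht => hR t (hsub (Icc_subset_Icc le_rfl hs.2 ht))) hR0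
    have hmono : (∫ t in a..s, bmsW A B u t) ≤ δ :=
      (bms_w_mono hu ha hs' hb hs.1 hs.2).trans hδ
    have h1 : ‖ψ s - x‖ ≤ ‖ψ s - ψ a‖ + ‖ψ a - x‖ := by
      have : ψ s - x = (ψ s - ψ a) + (ψ a - x) := by abel
      rw [this]; exact norm_add_le _ _
    have h2 : R * (∫ t in a..s, bmsW A B u t) ≤ R * δ :=
      mul_le_mul_of_nonneg_left hmono hR0
    nlinarith
  have hgI : IntervalIntegrable (fun s => A x + u s • B x) volume a b :=
    intervalIntegrable_const.add (bms_II (hu.smul_const (B x)) ha hb hab)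
  have hfI : IntervalIntegrable (bmsF A B u ψ) volume a b :=
    bms_II (bmsF_integrableOn hT hu hψ) ha hb hab
  have hkey : ψ b - (x + (b - a) • A x + (∫ s in a..b, u s) • B x)
      = (ψ a - x) + ∫ s in a..b, (bmsF A B u ψ s - (A x + u s • B x)) := by
    rw [intervalIntegral.integral_sub hfI hgI,
      ← bms_diff hT hu hψ heq ha hb,
      intervalIntegral.integral_add intervalIntegrable_const
        (bms_II (hu.smul_const (B x)) ha hb hab),
      intervalIntegral.integral_const, intervalIntegral.integral_smul_const]
    abel
  rw [hkey]
  have hbound : ‖∫ s in a..b, (bmsF A B u ψ s - (A x + u s • B x))‖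
      ≤ (e + δ * R) * ∫ s in a..b, bmsW A B u s :=
    bms_norm_int_le hT hu hψ ha hb hab hsx (by positivity)
  have h3 : (e + δ * R) * (∫ s in a..b, bmsW A B u s) ≤ (e + δ * R) * δ :=
    mul_le_mul_of_nonneg_left hδ (by positivity)
  calc ‖(ψ a - x) + ∫ s in a..b, (bmsF A B u ψ s - (A x + u s • B x))‖
      ≤ ‖ψ a - x‖ + ‖∫ s in a..b, (bmsF A B u ψ s - (A x + u s • B x))‖ :=
        norm_add_le _ _
    _ ≤ e + (e + δ * R) * δ := by linarith [hbound.trans h3]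
    _ = e * (1 + δ) + δ * (δ * R) := by ring

lemma bms_approx (hT : 0 ≤ T) (hu : IntegrableOn u (Icc (0:ℝ) T))
    (hψ : ContinuousOn ψ (Icc (0:ℝ) T))
    (heq : ∀ t ∈ Icc (0:ℝ) T, ψ t = ψ₀ + ∫ s in (0:ℝ)..t, bmsF A B u ψ s)
    {R : ℝ} (hR : ∀ t ∈ Icc (0:ℝ) T, ‖ψ t‖ ≤ R) (hR0 : 0 ≤ R)
    {δ : ℝ} (hδ0 : 0 ≤ δ) :
    ∀ q : ℕ, ∀ a b : ℝ, a ∈ Icc (0:ℝ) T → b ∈ Icc (0:ℝ) T → a ≤ b →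
      (∫ s in a..b, bmsW A B u s) ≤ q * δ →
      ∀ (j : ℕ) (x : H) (e : ℝ), 0 ≤ e → ‖ψ a - x‖ ≤ e →
        x ∈ Submodule.span ℂ (bmsWords A B ψ₀ j) →
        ∃ y ∈ Submodule.span ℂ (bmsWords A B ψ₀ (j + q)),
          ‖ψ b - y‖ ≤ (e + q * (δ * (δ * R))) * (1 + δ) ^ q := by
  intro q
  induction q with
  | zero =>
    intro a b ha hb hab hm j x e he0 he hx
    refine ⟨x, by simpa using hx, ?_⟩
    have h0 : (∫ s in a..b, bmsW A B u s) = 0 :=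
      le_antisymm (by simpa using hm) (bms_w_nonneg_int hu hab)
    have hinc : ‖ψ b - ψ a‖ ≤ R * ∫ s in a..b, bmsW A B u s :=
      bms_incr_le hT hu hψ heq ha hb hab
        (fun t ht => hR t ((Icc_subset_Icc ha.1 hb.2) ht)) hR0
    rw [h0, mul_zero] at hinc
    have h1 : ‖ψ b - x‖ ≤ ‖ψ b - ψ a‖ + ‖ψ a - x‖ := by
      have : ψ b - x = (ψ b - ψ a) + (ψ a - x) := by abel
      rw [this]; exact norm_add_le _ _
    simpa using (by linarith : ‖ψ b - x‖ ≤ e)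
  | succ q ih =>
    intro a b ha hb hab hm j x e he0 he hx
    have hsub : Icc a b ⊆ Icc (0:ℝ) T := Icc_subset_Icc ha.1 hb.2
    have hD : 0 ≤ δ * (δ * R) := by positivity
    have hq0 : (0:ℝ) ≤ (q:ℝ) := Nat.cast_nonneg q
    have hpownn : (0:ℝ) ≤ (1 + δ) ^ q := by positivity
    by_cases hm1 : (∫ s in a..b, bmsW A B u s) ≤ δ
    · -- single Euler step suffices
      set y := x + (b - a) • A x + (∫ s in a..b, u s) • B x with hy
      have hyy : y ∈ Submodule.span ℂ (bmsWords A B ψ₀ (j + (q+1))) := by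
        have := bmsWords_step A B ψ₀ hx (b - a) (∫ s in a..b, u s)
        exact bmsWords_span_mono A B ψ₀ (by omega) this
      refine ⟨y, hyy, ?_⟩
      have herr := bms_euler hT hu hψ heq hR hR0 ha hb hab hδ0 hm1 he0 he
      have hpow : (1 + δ) ≤ (1 + δ) ^ (q + 1) :=
        le_self_pow₀ (by linarith) (Nat.succ_ne_zero q)
      have h1 : e * (1 + δ) + δ * (δ * R)
          ≤ (e + (↑q + 1) * (δ * (δ * R))) * (1 + δ) := by
        nlinarith [mul_nonneg (mul_nonneg hq0 hD) hδ0, mul_nonneg hD hδ0]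
      have h2 : (e + (↑q + 1) * (δ * (δ * R))) * (1 + δ)
          ≤ (e + (↑q + 1) * (δ * (δ * R))) * (1 + δ) ^ (q + 1) :=
        mul_le_mul_of_nonneg_left hpow (by positivity)
      push_cast
      exact herr.trans (h1.trans h2)
    · push_neg at hm1
      -- split the interval
      have hcont : ContinuousOn (fun x => ∫ s in a..x, bmsW A B u s) (Icc a b) := by
        have := intervalIntegral.continuousOn_primitive_interval'
          (bms_IIr (bmsW_integrableOn A B hu) ha hb hab) (left_mem_uIcc (a := a) (b := b))
        rwa [uIcc_of_le hab] at this
      have hmem : δ ∈ Icc (∫ s in a..a, bmsW A B u s) (∫ s in a..b, bmsW A B u s) := by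
        simp only [intervalIntegral.integral_same]
        exact ⟨hδ0, hm1.le⟩
      obtain ⟨c, hc, hgc⟩ := intermediate_value_Icc hab hcont hmem
      have hgc' : (∫ s in a..c, bmsW A B u s) = δ := hgc
      have hc' : c ∈ Icc (0:ℝ) T := hsub hc
      -- Euler step on [a, c]
      set x₁ := x + (c - a) • A x + (∫ s in a..c, u s) • B x with hx₁def
      have hx₁ : x₁ ∈ Submodule.span ℂ (bmsWords A B ψ₀ (j + 1)) :=
        bmsWords_step A B ψ₀ hx (c - a) (∫ s in a..c, u s)
      have herr1 := bms_euler hT hu hψ heq hR hR0 ha hc' hc.1 hδ0 (le_of_eq hgc') he0 he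
      set e₁ := e * (1 + δ) + δ * (δ * R) with he₁def
      have he₁0 : 0 ≤ e₁ := by positivity
      have hrest : (∫ s in c..b, bmsW A B u s) ≤ q * δ := by
        have hadd := intervalIntegral.integral_add_adjacent_intervals
          (bms_IIr (bmsW_integrableOn A B hu) ha hc' hc.1)
          (bms_IIr (bmsW_integrableOn A B hu) hc' hb hc.2)
        rw [hgc'] at hadd
        push_cast at hm
        linarith
      obtain ⟨y, hy, hyb⟩ := ih c b hc' hb hc.2 hrest (j+1) x₁ e₁ he₁0 herr1 hx₁
      have hidx : j + 1 + q = j + (q + 1) := by omega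
      rw [hidx] at hy
      refine ⟨y, hy, ?_⟩
      have hstep : e₁ + ↑q * (δ * (δ * R))
          ≤ (e + (↑q + 1) * (δ * (δ * R))) * (1 + δ) := by
        rw [he₁def]
        nlinarith [mul_nonneg (mul_nonneg hq0 hD) hδ0, mul_nonneg hD hδ0]
      calc ‖ψ b - y‖ ≤ (e₁ + ↑q * (δ * (δ * R))) * (1 + δ) ^ q := hyb
        _ ≤ ((e + (↑q + 1) * (δ * (δ * R))) * (1 + δ)) * (1 + δ) ^ q :=
            mul_le_mul_of_nonneg_right hstep hpownn
        _ = (e + (↑q + 1) * (δ * (δ * R))) * (1 + δ) ^ (q + 1) := by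
            rw [pow_succ]; ring
        _ = (e + ↑(q + 1) * (δ * (δ * R))) * (1 + δ) ^ (q + 1) := by push_cast; ring


/-- Attainable points with total weighted control mass at most `n`. -/
def bmsSn (A' B' : H →L[ℂ] H) (ψ₀' : H) (n : ℕ) : Set H :=
  {x | ∃ T : ℝ, 0 ≤ T ∧ ∃ u : ℝ → ℝ, IntegrableOn u (Icc (0:ℝ) T) ∧
    (∫ s in (0:ℝ)..T, bmsW A' B' u s) ≤ n ∧
    ∃ ψ : ℝ → H, ContinuousOn ψ (Icc (0:ℝ) T) ∧ ψ 0 = ψ₀' ∧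
      (∀ t ∈ Icc (0:ℝ) T, ψ t = ψ₀' + ∫ s in (0:ℝ)..t, bmsF A' B' u ψ s) ∧ ψ T = x}

lemma bmsSn_totallyBounded (A B : H →L[ℂ] H) (ψ₀ : H) (n : ℕ) :
    TotallyBounded (bmsSn A B ψ₀ n) := by
  rw [Metric.totallyBounded_iff]
  intro ε hε
  set R : ℝ := 2 ^ (2 * n) * ‖ψ₀‖ with hRdef
  have hR0 : 0 ≤ R := by positivity
  set D : ℝ := 4 * (((n:ℝ) + 1) * ((R + 1) * Real.exp ((n:ℝ) + 1))) + 1 with hDdef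
  have hD0 : 0 < D := by positivity
  set δ : ℝ := min (1/2) (ε / D) with hδdef
  have hδ0 : 0 < δ := lt_min (by norm_num) (div_pos hε hD0)
  have hδhalf : δ ≤ 1/2 := min_le_left _ _
  have hδD : δ ≤ ε / D := min_le_right _ _
  set q : ℕ := ⌈(n:ℝ) / δ⌉₊ with hqdef
  have hnq : (n:ℝ) ≤ q * δ := by
    have h1 : (n:ℝ) / δ ≤ q := Nat.le_ceil _
    calc (n:ℝ) = ((n:ℝ)/δ) * δ := by field_simp
      _ ≤ q * δ := mul_le_mul_of_nonneg_right h1 hδ0.le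
  have hqn : (q:ℝ) * δ ≤ (n:ℝ) + 1 := by
    have h1 : (q:ℝ) < (n:ℝ)/δ + 1 := Nat.ceil_lt_add_one (by positivity)
    have h2 : (q:ℝ) * δ ≤ ((n:ℝ)/δ + 1) * δ :=
      mul_le_mul_of_nonneg_right h1.le hδ0.le
    have h3 : ((n:ℝ)/δ + 1) * δ = (n:ℝ) + δ := by field_simp
    nlinarith
  have hCst : (((n:ℝ) + 1) * ((R + 1) * Real.exp ((n:ℝ) + 1))) ≤ D / 4 := by
    rw [hDdef]; nlinarith
  have herr : ((0:ℝ) + (q:ℝ) * (δ * (δ * R))) * (1 + δ) ^ q ≤ ε / 4 := by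
    have hpow : (1 + δ) ^ q ≤ Real.exp ((n:ℝ) + 1) := by
      calc (1 + δ) ^ q ≤ (Real.exp δ) ^ q :=
            pow_le_pow_left₀ (by positivity) (by linarith [Real.add_one_le_exp δ]) q
        _ = Real.exp (q * δ) := (Real.exp_nat_mul δ q).symm
        _ ≤ Real.exp ((n:ℝ) + 1) := Real.exp_le_exp.mpr hqn
    have bound1 : ((q:ℝ)*δ)*(δ*R) ≤ (((n:ℝ)+1))*(δ*R) :=
      mul_le_mul_of_nonneg_right hqn (by positivity)
    calc ((0:ℝ) + (q:ℝ) * (δ * (δ * R))) * (1 + δ) ^ q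
        = (((q:ℝ)*δ)*(δ*R))*(1+δ)^q := by ring
      _ ≤ ((((n:ℝ)+1))*(δ*R))*(1+δ)^q := mul_le_mul_of_nonneg_right bound1 (by positivity)
      _ ≤ ((((n:ℝ)+1))*(δ*R))*Real.exp ((n:ℝ)+1) :=
          mul_le_mul_of_nonneg_left hpow (by positivity)
      _ = (((n:ℝ)+1)*(R*Real.exp ((n:ℝ)+1)))*δ := by ring
      _ ≤ (((n:ℝ)+1)*((R+1)*Real.exp ((n:ℝ)+1)))*δ := by
          have := Real.exp_pos ((n:ℝ)+1)
          gcongr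
          linarith
      _ ≤ (D/4)*(ε/D) := mul_le_mul hCst hδD hδ0.le (by positivity)
      _ = ε/4 := by field_simp
  set K : Set H := (Submodule.span ℂ (bmsWords A B ψ₀ q) : Set H) ∩
    Metric.closedBall 0 (R + ε) with hKdef
  have hKcpt : IsCompact K := bms_compact_span_ball _ (bmsWords_finite A B ψ₀ q) _
  obtain ⟨t, htfin, htcov⟩ := Metric.totallyBounded_iff.mp hKcpt.totallyBounded (ε/2)
    (by positivity)
  refine ⟨t, htfin, ?_⟩
  rintro x ⟨T, hT, u, hu, hmass, ψ, hψ, hψ0, heq, hψT⟩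
  have hTmem : T ∈ Icc (0:ℝ) T := ⟨hT, le_rfl⟩
  have h0mem : (0:ℝ) ∈ Icc (0:ℝ) T := ⟨le_rfl, hT⟩
  have hRψ : ∀ s ∈ Icc (0:ℝ) T, ‖ψ s‖ ≤ R := by
    have hsup := bms_sup_bound hT hu hψ heq (2*n) 0 T h0mem hTmem hT
      (by push_cast; linarith)
    intro s hs
    rw [hRdef]
    have h := hsup s hs
    rwa [hψ0] at h
  obtain ⟨y, hy, hyerr⟩ := bms_approx hT hu hψ heq hRψ hR0 hδ0.le q 0 T h0mem hTmem hT
    (hmass.trans hnq) 0 ψ₀ 0 le_rfl (show ‖ψ 0 - ψ₀‖ ≤ 0 by rw [hψ0]; simp) (bmsWords_mem_zero A B ψ₀)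
  rw [zero_add] at hy
  have hyerr' : ‖ψ T - y‖ ≤ ε / 4 := hyerr.trans herr
  have hyK : y ∈ K := by
    refine ⟨hy, ?_⟩
    rw [Metric.mem_closedBall, dist_zero_right]
    have h1 : ‖y‖ ≤ ‖ψ T‖ + ‖ψ T - y‖ := by
      have h := norm_sub_le (ψ T) (ψ T - y)
      simpa [sub_sub_cancel] using h
    have h2 := hRψ T hTmem
    linarith
  obtain ⟨z, hz, hyz⟩ := mem_iUnion₂.mp (htcov hyK)
  refine mem_iUnion₂.mpr ⟨z, hz, ?_⟩
  rw [Metric.mem_ball] at hyz ⊢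
  have hdist : dist x y ≤ ε / 4 := by
    rw [← hψT, dist_eq_norm]; exact hyerr'
  calc dist x z ≤ dist x y + dist y z := dist_triangle _ _ _
    _ < ε/4 + ε/2 := by linarith
    _ ≤ ε := by linarith

end BMSAux

/-- Ball–Marsden–Slemrod / Turinici obstruction: for a bilinear system
`dψ/dt = (A + u(t)B)ψ` in an infinite-dimensional separable complex Hilbert space,
with bounded `A`, `B`, the attainable set from `ψ₀` with `L^r` controls (`r > 1`) is
contained in a countable union of closed sets with empty interior; in particular it
has empty interior. -/
theorem ball_marsden_slemrod_obstruction
    {H : Type*} [NormedAddCommGroup H] [InnerProductSpace ℂ H] [CompleteSpace H]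
    [TopologicalSpace.SeparableSpace H] (hinf : ¬ FiniteDimensional ℂ H)
    (A B : H →L[ℂ] H) (ψ₀ : H) (r : ℝ) (hr : 1 < r) :
    let S : Set H := {x : H | ∃ T : ℝ, 0 ≤ T ∧ ∃ u : ℝ → ℝ,
      MeasureTheory.MemLp u (ENNReal.ofReal r) (volume.restrict (Set.Icc (0:ℝ) T)) ∧
      ∃ ψ : ℝ → H, ContinuousOn ψ (Set.Icc 0 T) ∧ ψ 0 = ψ₀ ∧
        (∀ t ∈ Set.Icc (0:ℝ) T,
          ψ t = ψ₀ + ∫ s in (0:ℝ)..t, (A (ψ s) + u s • B (ψ s))) ∧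
        ψ T = x}
    (∃ F : ℕ → Set H, (∀ n, IsClosed (F n) ∧ interior (F n) = ∅) ∧ S ⊆ ⋃ n, F n) ∧
      interior S = ∅ := by
  intro S
  set F : ℕ → Set H := fun n => closure (bmsSn A B ψ₀ n) with hF
  have hFprop : ∀ n, IsClosed (F n) ∧ interior (F n) = ∅ := by
    intro n
    refine ⟨isClosed_closure, ?_⟩
    have hcpt : IsCompact (F n) :=
      (bmsSn_totallyBounded A B ψ₀ n).closure.isCompact_of_isClosed
        isClosed_closure
    exact bms_compact_interior_empty hinf hcpt
  have hSsub : S ⊆ ⋃ n, F n := by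
    rintro x ⟨T, hT, u, hmem, ψ, hψ, hψ0, heq, hψT⟩
    have hu : IntegrableOn u (Icc (0:ℝ) T) := by
      have h1 : (1 : ENNReal) ≤ ENNReal.ofReal r := ENNReal.one_le_ofReal.mpr hr.le
      exact memLp_one_iff_integrable.mp (hmem.mono_exponent h1)
    set n : ℕ := ⌈∫ s in (0:ℝ)..T, bmsW A B u s⌉₊ with hn
    have hxmem : x ∈ bmsSn A B ψ₀ n :=
      ⟨T, hT, u, hu, Nat.le_ceil _, ψ, hψ, hψ0,
        (fun t ht => by simpa [bmsF] using heq t ht), hψT⟩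
    exact mem_iUnion.mpr ⟨n, subset_closure hxmem⟩
  refine ⟨⟨F, hFprop, hSsub⟩, ?_⟩
  have hdense : Dense (⋃ n, F n)ᶜ := by
    rw [compl_iUnion]
    exact dense_iInter_of_isOpen (fun n => (hFprop n).1.isOpen_compl)
      (fun n => interior_eq_empty_iff_dense_compl.mp (hFprop n).2)
  have hintU : interior (⋃ n, F n) = ∅ := interior_eq_empty_iff_dense_compl.mpr hdense
  have hsub2 : interior S ⊆ interior (⋃ n, F n) := interior_mono hSsub
  rw [hintU] at hsub2
  exact subset_empty_iff.mp hsub2
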